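/- For coprime positive integers p and q and any two points x, y in [0,q)×[0,p), the Möbius distance on M^{q/p} is subadditive with respect to the addition ⊕: dist(x⊕y, (0,0)) ≤ dist(x,(0,0)) + dist(y,(0,0)). -/

import Mathlib

/-- `mmod k u` is the unique element of `[0, k)` such that `u - mmod k u`
is an integer multiple of `k`. -/
noncomputable def mmod (k : ℕ) (u : ℝ) : ℝ := u - (k : ℝ) * (⌊u / (k : ℝ)⌋ : ℤ)

/-- `dmod k u = min (mmod k u) (k - mmod k u)`. -/
noncomputable def dmod (k : ℕ) (u : ℝ) : ℝ := min (mmod k u) ((k : ℝ) - mmod k u)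

/-- Distance on the Möbius ring `M^{q/p}`, whose points lie in `[0,q) × [0,p)`:
the minimum over `j ∈ {0, …, p*q - 1}` of
`dmod q (y₁ - x₁ + j/p) + dmod p (y₂ - x₂ + j/q)`. -/
noncomputable def distMqp (p q : ℕ) (x y : ℝ × ℝ) : ℝ :=
  sInf {v : ℝ | ∃ j ∈ Finset.range (p * q),
    v = dmod q (y.1 - x.1 + (j : ℝ) / (p : ℝ)) + dmod p (y.2 - x.2 + (j : ℝ) / (q : ℝ))}

/-- Addition on the Möbius ring `M^{q/p}`. -/
noncomputable def oplusMqp (p q : ℕ) (x y : ℝ × ℝ) : ℝ × ℝ :=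
  (mmod q (x.1 + y.1), mmod p (x.2 + y.2))

lemma mmod_eq_self {k : ℕ} {u : ℝ} (h0 : 0 ≤ u) (h1 : u < k) : mmod k u = u := by
  have hk : (0:ℝ) < k := lt_of_le_of_lt h0 h1
  unfold mmod
  rw [Int.floor_eq_zero_iff.mpr ⟨div_nonneg h0 hk.le, (div_lt_one hk).mpr h1⟩]
  simp

lemma mmod_add_int (k : ℕ) (hk : 0 < k) (u : ℝ) (n : ℤ) :
    mmod k (u + (k : ℝ) * n) = mmod k u := by
  have hk' : (0:ℝ) < k := by exact_mod_cast hk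
  unfold mmod
  rw [show (u + (k:ℝ) * n) / k = u / k + n by field_simp, Int.floor_add_intCast]
  push_cast
  ring

lemma dmod_congr (k : ℕ) (hk : 0 < k) {u v : ℝ} (n : ℤ) (h : u = v + (k : ℝ) * n) :
    dmod k u = dmod k v := by
  subst h; unfold dmod; rw [mmod_add_int k hk]

lemma mmod_nonneg (k : ℕ) (hk : 0 < k) (u : ℝ) : 0 ≤ mmod k u := by
  have hk' : (0:ℝ) < k := by exact_mod_cast hk
  have h2 : (⌊u / (k:ℝ)⌋ : ℝ) * k ≤ u := (le_div_iff₀ hk').mp (Int.floor_le (u / k))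
  unfold mmod
  nlinarith [h2]

lemma mmod_lt (k : ℕ) (hk : 0 < k) (u : ℝ) : mmod k u < k := by
  have hk' : (0:ℝ) < k := by exact_mod_cast hk
  have h2 : u < ((⌊u / (k:ℝ)⌋ : ℝ) + 1) * k := (div_lt_iff₀ hk').mp (Int.lt_floor_add_one (u / k))
  unfold mmod
  nlinarith [h2]

lemma dmod_add_le (k : ℕ) (hk : 0 < k) (u v : ℝ) :
    dmod k (u + v) ≤ dmod k u + dmod k v := by
  have hk' : (0:ℝ) < k := by exact_mod_cast hk
  set a := mmod k u with ha
  set b := mmod k v with hb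
  have ha0 : 0 ≤ a := mmod_nonneg k hk u
  have ha1 : a < k := mmod_lt k hk u
  have hb0 : 0 ≤ b := mmod_nonneg k hk v
  have hb1 : b < k := mmod_lt k hk v
  have hcongr : dmod k (u + v) = dmod k (a + b) := by
    apply dmod_congr k hk (⌊u / (k:ℝ)⌋ + ⌊v / (k:ℝ)⌋)
    simp only [ha, hb]; unfold mmod; push_cast; ring
  rw [hcongr]
  have hdu : dmod k u = min a ((k:ℝ) - a) := rfl
  have hdv : dmod k v = min b ((k:ℝ) - b) := rfl
  rw [hdu, hdv]
  rcases lt_or_ge (a + b) (k : ℝ) with hab | hab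
  · have hm : mmod k (a + b) = a + b := mmod_eq_self (by linarith) hab
    unfold dmod
    rw [hm]
    rcases min_cases (a+b) ((k:ℝ)-(a+b)) with ⟨hL,hL'⟩|⟨hL,hL'⟩ <;>
    rcases min_cases a ((k:ℝ)-a) with ⟨h1,h1'⟩|⟨h1,h1'⟩ <;>
    rcases min_cases b ((k:ℝ)-b) with ⟨h2,h2'⟩|⟨h2,h2'⟩ <;>
    rw [hL, h1, h2] <;> linarith
  · have hm : mmod k (a + b) = a + b - k := by
      rw [show a + b = (a + b - k) + (k:ℝ) * ((1:ℤ):ℝ) by push_cast; ring,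
        mmod_add_int k hk, mmod_eq_self (by linarith) (by linarith)]
      push_cast
      ring
    unfold dmod
    rw [hm]
    rcases min_cases (a+b-(k:ℝ)) ((k:ℝ)-(a+b-(k:ℝ))) with ⟨hL,hL'⟩|⟨hL,hL'⟩ <;>
    rcases min_cases a ((k:ℝ)-a) with ⟨h1,h1'⟩|⟨h1,h1'⟩ <;>
    rcases min_cases b ((k:ℝ)-b) with ⟨h2,h2'⟩|⟨h2,h2'⟩ <;>
    rw [hL, h1, h2] <;> linarith

/-- Subadditivity of the Möbius distance with respect to `⊕`:
`dist (x ⊕ y) 0 ≤ dist x 0 + dist y 0`. -/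
theorem distMqp_oplus_le (p q : ℕ) (hp : 0 < p) (hq : 0 < q) (hpq : Nat.Coprime p q)
    (x y : ℝ × ℝ)
    (hx : x ∈ Set.Ico (0:ℝ) (q : ℝ) ×ˢ Set.Ico (0:ℝ) (p : ℝ))
    (hy : y ∈ Set.Ico (0:ℝ) (q : ℝ) ×ˢ Set.Ico (0:ℝ) (p : ℝ)) :
    distMqp p q (oplusMqp p q x y) (0, 0)
      ≤ distMqp p q x (0, 0) + distMqp p q y (0, 0) := by
  have hp' : (0:ℝ) < p := by exact_mod_cast hp
  have hq' : (0:ℝ) < q := by exact_mod_cast hq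
  have hpq0 : 0 < p * q := Nat.mul_pos hp hq
  set F : (ℝ × ℝ) → ℕ → ℝ := fun z j =>
    dmod q ((0:ℝ) - z.1 + (j : ℝ) / (p : ℝ)) + dmod p ((0:ℝ) - z.2 + (j : ℝ) / (q : ℝ))
    with hF
  set S : (ℝ × ℝ) → Set ℝ := fun z => {v : ℝ | ∃ j ∈ Finset.range (p * q), v = F z j}
    with hSdef
  have hdist : ∀ z : ℝ × ℝ, distMqp p q z (0, 0) = sInf (S z) := fun z => rfl
  have hSim : ∀ z, S z = F z '' (Finset.range (p * q) : Set ℕ) := by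
    intro z
    ext v
    simp [hSdef, eq_comm, Set.mem_image]
  have hSfin : ∀ z, (S z).Finite := by
    intro z; rw [hSim]; exact (Finset.finite_toSet _).image _
  have hSne : ∀ z, (S z).Nonempty := by
    intro z
    exact ⟨F z 0, 0, Finset.mem_range.mpr hpq0, rfl⟩
  obtain ⟨j₁, hj₁mem, hj₁⟩ := (hSne x).csInf_mem (hSfin x)
  obtain ⟨j₂, hj₂mem, hj₂⟩ := (hSne y).csInf_mem (hSfin y)
  set j₃ : ℕ := (j₁ + j₂) % (p * q) with hj₃
  set n : ℕ := (j₁ + j₂) / (p * q) with hn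
  have hnm : j₃ + p * q * n = j₁ + j₂ := Nat.mod_add_div _ _
  have hcast : (j₃ : ℝ) + (p : ℝ) * q * n = (j₁ : ℝ) + j₂ := by exact_mod_cast hnm
  have hj₃mem : j₃ ∈ Finset.range (p * q) := Finset.mem_range.mpr (Nat.mod_lt _ hpq0)
  set z := oplusMqp p q x y with hz
  have hle : sInf (S z) ≤ F z j₃ := by
    apply csInf_le ((hSfin z).bddBelow)
    exact ⟨j₃, hj₃mem, rfl⟩
  rw [hdist, hdist, hdist, hj₁, hj₂]
  refine le_trans hle ?_
  have hz1 : z.1 = mmod q (x.1 + y.1) := rfl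
  have hz2 : z.2 = mmod p (x.2 + y.2) := rfl
  have h1 : dmod q ((0:ℝ) - z.1 + (j₃ : ℝ) / p)
      = dmod q (((0:ℝ) - x.1 + (j₁ : ℝ) / p) + ((0:ℝ) - y.1 + (j₂ : ℝ) / p)) := by
    rw [hz1]
    apply dmod_congr q hq (⌊(x.1 + y.1) / (q:ℝ)⌋ - (n : ℤ))
    unfold mmod
    push_cast
    field_simp
    nlinarith [hcast]
  have h2 : dmod p ((0:ℝ) - z.2 + (j₃ : ℝ) / q)
      = dmod p (((0:ℝ) - x.2 + (j₁ : ℝ) / q) + ((0:ℝ) - y.2 + (j₂ : ℝ) / q)) := by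
    rw [hz2]
    apply dmod_congr p hp (⌊(x.2 + y.2) / (p:ℝ)⌋ - (n : ℤ))
    unfold mmod
    push_cast
    field_simp
    nlinarith [hcast]
  calc F z j₃ = dmod q ((0:ℝ) - z.1 + (j₃ : ℝ) / p) + dmod p ((0:ℝ) - z.2 + (j₃ : ℝ) / q) := rfl
    _ = dmod q (((0:ℝ) - x.1 + (j₁ : ℝ) / p) + ((0:ℝ) - y.1 + (j₂ : ℝ) / p))
        + dmod p (((0:ℝ) - x.2 + (j₁ : ℝ) / q) + ((0:ℝ) - y.2 + (j₂ : ℝ) / q)) := by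
        rw [h1, h2]
    _ ≤ (dmod q ((0:ℝ) - x.1 + (j₁ : ℝ) / p) + dmod q ((0:ℝ) - y.1 + (j₂ : ℝ) / p))
        + (dmod p ((0:ℝ) - x.2 + (j₁ : ℝ) / q) + dmod p ((0:ℝ) - y.2 + (j₂ : ℝ) / q)) := by
        gcongr <;> [exact dmod_add_le q hq _ _; exact dmod_add_le p hp _ _]
    _ = F x j₁ + F y j₂ := by rw [hF]; ring
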